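/- Let (α_i)_{i≥1} be a purely periodic sequence of nonnegative integers with period k (so α_{i+k} = α_i for all i), satisfying α_{j+1} α_{j+2} … ≤ α_1 α_2 … lexicographically for all j ≥ 1 and (α_1 − α_{j+1})(α_1 − α_{j+2}) … < α_1 α_2 … lexicographically for all j ≥ 1. Suppose m ≥ k is an integer such that (α_1 − α_{j+1}) … (α_1 − α_m) < α_1 … α_{m−j} lexicographically (as finite words) for all 0 ≤ j < m, and let N be a positive integer with kN ≥ m. Then the sequence (γ_i) = (α_1 … α_k)^N (α_1 … α_m (α_1 − α_1)(α_1 − α_2) … (α_1 − α_m))^∞, i.e., N copies of the word α_1…α_k followed by the periodic repetition of the word α_1 … α_m (α_1 − α_1) … (α_1 − α_m), satisfies both γ_{j+1} γ_{j+2} … < γ_1 γ_2 … and (γ_1 − γ_{j+1})(γ_1 − γ_{j+2}) … < γ_1 γ_2 … lexicographically for all j ≥ 1. -/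
import Mathlib


/-- `c` is a `q`-expansion: a sequence of nonnegative integers with `c i ≤ q`
(we index from 0, so `c i` stands for the digit `c_{i+1}` of the paper)
such that `∑_{i≥1} c_i q^{-i} = 1`. -/
def IsExpansion (q : ℝ) (c : ℕ → ℕ) : Prop :=
  (∀ i, (c i : ℝ) ≤ q) ∧ ∑' i : ℕ, (c i : ℝ) / q ^ (i + 1) = 1

/-- The set `𝒰` of univoque numbers: real numbers `q ≥ 1` admitting exactly one
`q`-expansion. -/
def UnivoqueSet : Set ℝ := {q | 1 ≤ q ∧ ∃! c : ℕ → ℕ, IsExpansion q c}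

/-- `γ` is the greedy `q`-expansion: for every `n`, `γ n` is the largest
nonnegative integer `k` such that `(∑_{i<n} γ i / q^(i+1)) + k / q^(n+1) ≤ 1`. -/
def IsGreedy (q : ℝ) (γ : ℕ → ℕ) : Prop :=
  ∀ n : ℕ, IsGreatest
    {k : ℕ | (∑ i ∈ Finset.range n, (γ i : ℝ) / q ^ (i + 1)) + (k : ℝ) / q ^ (n + 1) ≤ 1} (γ n)

/-- `α` is the quasi-greedy `q`-expansion: for every `n`, `α n` is the largest
nonnegative integer `k` such that `(∑_{i<n} α i / q^(i+1)) + k / q^(n+1) < 1`. -/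
def IsQuasiGreedy (q : ℝ) (α : ℕ → ℕ) : Prop :=
  ∀ n : ℕ, IsGreatest
    {k : ℕ | (∑ i ∈ Finset.range n, (α i : ℝ) / q ^ (i + 1)) + (k : ℝ) / q ^ (n + 1) < 1} (α n)

/-- Strict lexicographic order on sequences of nonnegative integers. -/
def LexLT (a b : ℕ → ℕ) : Prop := ∃ n : ℕ, (∀ i < n, a i = b i) ∧ a n < b n

/-- Lexicographic order on sequences of nonnegative integers. -/
def LexLE (a b : ℕ → ℕ) : Prop := LexLT a b ∨ a = b

/-- Strict lexicographic order on finite words of length `n`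
(given as functions on the first `n` indices). -/
def WordLT (n : ℕ) (a b : ℕ → ℕ) : Prop := ∃ i < n, (∀ j < i, a j = b j) ∧ a i < b i

/-- The constructed sequence
`(γ_i) = (α_1…α_k)^N (α_1…α_m (α_1-α_1)…(α_1-α_m))^∞`
satisfies the univoque conditions (21) and (22). -/
theorem constructed_sequence_univoque (α : ℕ → ℕ) (k : ℕ) (hk : 1 ≤ k)
    (hper : ∀ i, α (i + k) = α i)
    (h1 : ∀ j : ℕ, 1 ≤ j → LexLE (fun i => α (i + j)) α)
    (h2 : ∀ j : ℕ, 1 ≤ j → LexLT (fun i => α 0 - α (i + j)) α)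
    (m : ℕ) (hm : k ≤ m)
    (hword : ∀ j < m, WordLT (m - j) (fun i => α 0 - α (j + i)) α)
    (N : ℕ) (hN : 1 ≤ N) (hkN : m ≤ k * N)
    (γ : ℕ → ℕ)
    (hγ : ∀ i : ℕ, γ i =
      if i < k * N then α (i % k)
      else if (i - k * N) % (2 * m) < m then α ((i - k * N) % (2 * m))
      else α 0 - α ((i - k * N) % (2 * m) - m)) :
    ∀ j : ℕ, 1 ≤ j →
      LexLT (fun i => γ (i + j)) γ ∧ LexLT (fun i => γ 0 - γ (i + j)) γ := by
  set L := k * N with hL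
  have hm1 : 1 ≤ m := hk.trans hm
  have hkL : k ≤ L := by
    rw [hL]
    calc k = k * 1 := (Nat.mul_one k).symm
    _ ≤ k * N := Nat.mul_le_mul_left k hN
  -- periodicity helpers
  have perc : ∀ c i, α (i + c * k) = α i := by
    intro c
    induction c with
    | zero => intro i; simp
    | succ c ih =>
      intro i
      have e : i + (c + 1) * k = (i + c * k) + k := by ring
      rw [e, hper, ih]
  have pmod : ∀ i, α (i % k) = α i := by
    intro i
    have h := perc (i / k) (i % k)
    rw [Nat.mul_comm, Nat.mod_add_div] at h
    exact h.symm
  have wbound : ∀ f : ℕ → ℕ, (∀ i, f (i + k) = f i) →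
      ∀ n, (∀ i < n, f i = α i) → f n ≠ α n → n < k := by
    intro f hf n hn hne
    by_contra hcon
    push_neg at hcon
    apply hne
    have fc : ∀ c i, f (i + c * k) = f i := by
      intro c
      induction c with
      | zero => intro i; simp
      | succ c ih =>
        intro i
        have e : i + (c + 1) * k = (i + c * k) + k := by ring
        rw [e, hf, ih]
    have fmod : f (n % k) = f n := by
      have h := fc (n / k) (n % k)
      rw [Nat.mul_comm, Nat.mod_add_div] at h
      exact h.symm
    rw [← fmod, ← pmod n]
    exact hn (n % k) (lt_of_lt_of_le (Nat.mod_lt n (by omega)) hcon)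
  -- basic bounds
  have hle : ∀ i, α i ≤ α 0 := by
    intro i
    rcases Nat.eq_zero_or_pos i with rfl | hi
    · exact le_refl _
    rcases h1 i hi with ⟨n, hn, hs⟩ | heq
    · rcases Nat.eq_zero_or_pos n with rfl | hn0
      · have h' : α i < α 0 := by simpa using hs
        omega
      · have h' : α i = α 0 := by simpa using hn 0 hn0
        omega
    · have h' : α i = α 0 := by simpa using congrFun heq 0
      omega
  have h0pos : 1 ≤ α 0 := by
    obtain ⟨n, hn, hs⟩ := h2 1 le_rfl
    have hs' : α 0 - α (n + 1) < α n := hs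
    have := hle n
    omega
  -- main comparison facts, with witnesses bounded by k
  have E1 : ∀ j, 1 ≤ j →
      (∃ n, n < k ∧ (∀ i < n, α (i + j) = α i) ∧ α (n + j) < α n) ∨
      (∀ i, α (i + j) = α i) := by
    intro j hj
    rcases h1 j hj with ⟨n, hn, hs⟩ | heq
    · left
      refine ⟨n, ?_, hn, hs⟩
      exact wbound (fun i => α (i + j))
        (fun i => by show α (i + k + j) = α (i + j); rw [show i + k + j = (i + j) + k by ring, hper])
        n hn (Nat.ne_of_lt hs)
    · right
      intro i
      exact congrFun heq i
  have E2 : ∀ j, ∃ n, n < k ∧ (∀ i < n, α 0 - α (i + j) = α i) ∧ α 0 - α (n + j) < α n := by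
    intro j
    rcases Nat.eq_zero_or_pos j with rfl | hj
    · refine ⟨0, by omega, by omega, ?_⟩
      show α 0 - α (0 + 0) < α 0
      simp only [Nat.add_zero, Nat.zero_add, Nat.sub_self]
      omega
    · obtain ⟨n, hn, hs⟩ := h2 j hj
      refine ⟨n, ?_, hn, hs⟩
      exact wbound (fun i => α 0 - α (i + j))
        (fun i => by show α 0 - α (i + k + j) = α 0 - α (i + j);
                     rw [show i + k + j = (i + j) + k by ring, hper])
        n hn (Nat.ne_of_lt hs)
  have E2' : ∀ j, ∃ n, n < k ∧ (∀ i < n, α 0 - α i = α (i + j)) ∧ α 0 - α n < α (n + j) := by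
    intro j
    obtain ⟨n, hnk, hn, hs⟩ := E2 j
    refine ⟨n, hnk, fun i hi => ?_, ?_⟩
    · have ha := hn i hi
      have hb := hle i
      have hc := hle (i + j)
      omega
    · have hb := hle n
      have hc := hle (n + j)
      omega
  have E3' : ∀ j, j < m → ∃ n, n < m - j ∧ (∀ i < n, α 0 - α i = α (j + i)) ∧
      α 0 - α n < α (j + n) := by
    intro j hj
    obtain ⟨n, hn, hveq, hs⟩ := hword j hj
    refine ⟨n, hn, fun i hi => ?_, ?_⟩
    · have ha : α 0 - α (j + i) = α i := hveq i hi
      have hb := hle i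
      have hc := hle (j + i)
      omega
    · have hb := hle n
      have hc := hle (j + n)
      have hd : α 0 - α (j + n) < α n := hs
      omega
  -- values of γ
  have G1 : ∀ i, i < L + m → γ i = α i := by
    intro i hi
    rw [hγ i]
    by_cases h : i < L
    · rw [if_pos h, pmod]
    · rw [if_neg h]
      have e1 : (i - L) % (2 * m) = i - L := Nat.mod_eq_of_lt (by omega)
      rw [e1, if_pos (by omega)]
      have hp := perc N (i - L)
      rw [Nat.mul_comm N k, ← hL, Nat.sub_add_cancel (by omega)] at hp
      exact hp.symm
  have G2 : ∀ x, γ (L + x) = if x % (2 * m) < m then α (x % (2 * m))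
      else α 0 - α (x % (2 * m) - m) := by
    intro x
    rw [hγ]
    rw [if_neg (by omega), Nat.add_sub_cancel_left]
  have Gmod : ∀ x, γ (L + x) = γ (L + x % (2 * m)) := by
    intro x
    rw [G2 x, G2 (x % (2 * m)), Nat.mod_mod_of_dvd x dvd_rfl]
  have Gα : ∀ x, x < m → γ (L + x) = α x := by
    intro x hx
    rw [G2 x, Nat.mod_eq_of_lt (by omega), if_pos hx]
  have Gβ : ∀ x, m ≤ x → x < 2 * m → γ (L + x) = α 0 - α (x - m) := by
    intro x h1x h2x
    rw [G2 x, Nat.mod_eq_of_lt h2x, if_neg (by omega)]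
  have Gcomp : ∀ x, α 0 - γ (L + x) = γ (L + (x + m)) := by
    intro x
    rw [Gmod x, Gmod (x + m)]
    have hx : x % (2 * m) < 2 * m := Nat.mod_lt _ (by omega)
    have hxm : (x + m) % (2 * m) =
        if x % (2 * m) < m then x % (2 * m) + m else x % (2 * m) - m := by
      by_cases h : x % (2 * m) < m
      · rw [if_pos h]
        conv_lhs => rw [Nat.add_mod, Nat.mod_eq_of_lt (show m < 2 * m by omega)]
        rw [Nat.mod_eq_of_lt (by omega)]
      · rw [if_neg h]
        conv_lhs => rw [Nat.add_mod, Nat.mod_eq_of_lt (show m < 2 * m by omega)]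
        have e : x % (2 * m) + m - 2 * m = x % (2 * m) - m := by omega
        rw [Nat.mod_eq_sub_mod (by omega), e, Nat.mod_eq_of_lt (by omega)]
    rw [hxm]
    by_cases h : x % (2 * m) < m
    · rw [if_pos h, Gα _ h, Gβ _ (by omega) (by omega), Nat.add_sub_cancel]
    · rw [if_neg h, Gβ _ (by omega) hx, Gα _ (by omega)]
      have := hle (x % (2 * m) - m)
      omega
  -- Condition (21): every shifted tail is lexicographically smaller
  have cond1 : ∀ j, 1 ≤ j → LexLT (fun i => γ (i + j)) γ := by
    intro j hj
    by_cases hjL : j ≤ L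
    · rcases E1 j hj with ⟨n, hnk, heqn, hltn⟩ | hpj
      · -- strict drop within the α-region
        refine ⟨n, fun i hi => ?_, ?_⟩
        · show γ (i + j) = γ i
          rw [G1 (i + j) (by omega), G1 i (by omega)]
          exact heqn i hi
        · show γ (n + j) < γ n
          rw [G1 (n + j) (by omega), G1 n (by omega)]
          exact hltn
      · -- σ^j α = α: defer to the first complement block
        by_cases hjk : k ≤ j
        · obtain ⟨n, hnk, heqc, hltc⟩ := E2' (L + m - j)
          refine ⟨(L + m - j) + n, fun i hi => ?_, ?_⟩
          · show γ (i + j) = γ i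
            by_cases hii : i < L + m - j
            · rw [G1 (i + j) (by omega), G1 i (by omega)]
              exact hpj i
            · have hi'n : i - (L + m - j) < n := by omega
              have e1 : i + j = L + (m + (i - (L + m - j))) := by omega
              rw [e1, Gβ (m + (i - (L + m - j))) (by omega) (by omega),
                Nat.add_sub_cancel_left, G1 i (by omega), heqc _ hi'n]
              congr 1
              omega
          · show γ ((L + m - j) + n + j) < γ ((L + m - j) + n)
            have e1 : (L + m - j) + n + j = L + (m + n) := by omega
            rw [e1, Gβ (m + n) (by omega) (by omega), Nat.add_sub_cancel_left,
              G1 ((L + m - j) + n) (by omega)]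
            have e2 : α (n + (L + m - j)) = α ((L + m - j) + n) := by
              congr 1
              omega
            omega
        · -- 1 ≤ j < k : use the word hypothesis at shift m - j
          push_neg at hjk
          obtain ⟨n, hn, heqc, hltc⟩ := E3' (m - j) (by omega)
          have hnj : n < j := by omega
          refine ⟨(L + m - j) + n, fun i hi => ?_, ?_⟩
          · show γ (i + j) = γ i
            by_cases hii : i < L + m - j
            · rw [G1 (i + j) (by omega), G1 i (by omega)]
              exact hpj i
            · have hi'n : i - (L + m - j) < n := by omega
              have e1 : i + j = L + (m + (i - (L + m - j))) := by omega
              rw [e1, Gβ (m + (i - (L + m - j))) (by omega) (by omega),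
                Nat.add_sub_cancel_left, G1 i (by omega), heqc _ hi'n]
              have hp := perc N ((m - j) + (i - (L + m - j)))
              rw [Nat.mul_comm N k, ← hL] at hp
              rw [← hp]
              congr 1
              omega
          · show γ ((L + m - j) + n + j) < γ ((L + m - j) + n)
            have e1 : (L + m - j) + n + j = L + (m + n) := by omega
            rw [e1, Gβ (m + n) (by omega) (by omega), Nat.add_sub_cancel_left,
              G1 ((L + m - j) + n) (by omega)]
            have hp := perc N ((m - j) + n)
            rw [Nat.mul_comm N k, ← hL] at hp
            have e2 : (m - j) + n + L = (L + m - j) + n := by omega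
            rw [e2] at hp
            omega
    · -- j > L : reduce to the periodic part
      push_neg at hjL
      set t := (j - L) % (2 * m) with htdef
      have ht2m : t < 2 * m := Nat.mod_lt _ (by omega)
      have hred : ∀ i, γ (i + j) = γ (L + (t + i)) := by
        intro i
        have e2 : (j - L + i) % (2 * m) = (t + i) % (2 * m) := by
          conv_lhs => rw [Nat.add_mod]
          conv_rhs => rw [Nat.add_mod]
          rw [← htdef, Nat.mod_eq_of_lt ht2m]
        have e1 : i + j = L + (j - L + i) := by omega
        rw [e1, Gmod (j - L + i), Gmod (t + i), e2]
      by_cases htm : t < m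
      · rcases Nat.eq_zero_or_pos t with ht0 | ht0
        · -- t = 0
          obtain ⟨n, hnk, heqc, hltc⟩ := E2' m
          refine ⟨m + n, fun i hi => ?_, ?_⟩
          · show γ (i + j) = γ i
            rw [hred i]
            by_cases hii : i < m
            · rw [show t + i = i by omega, Gα i hii, G1 i (by omega)]
            · have e1 : t + i = m + (i - m) := by omega
              rw [e1, Gβ (m + (i - m)) (by omega) (by omega), Nat.add_sub_cancel_left,
                G1 i (by omega), heqc _ (by omega)]
              congr 1
              omega
          · show γ (m + n + j) < γ (m + n)
            rw [hred (m + n), show t + (m + n) = m + n by omega,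
              Gβ (m + n) (by omega) (by omega), Nat.add_sub_cancel_left,
              G1 (m + n) (by omega)]
            have e2 : α (n + m) = α (m + n) := by
              congr 1
              omega
            omega
        · -- 1 ≤ t < m
          have defer : (∀ i, i < m - t → α (i + t) = α i) →
              LexLT (fun i => γ (i + j)) γ := by
            intro heqall
            obtain ⟨n', hn'k, heqc, hltc⟩ := E2' (m - t)
            refine ⟨(m - t) + n', fun i hi => ?_, ?_⟩
            · show γ (i + j) = γ i
              rw [hred i]
              by_cases hii : i < m - t
              · rw [Gα (t + i) (by omega), G1 i (by omega)]
                have h' := heqall i hii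
                have e : α (i + t) = α (t + i) := by
                  congr 1
                  omega
                omega
              · have e1 : t + i = m + (i - (m - t)) := by omega
                rw [e1, Gβ (m + (i - (m - t))) (by omega) (by omega),
                  Nat.add_sub_cancel_left, G1 i (by omega), heqc _ (by omega)]
                congr 1
                omega
            · show γ ((m - t) + n' + j) < γ ((m - t) + n')
              rw [hred _, show t + ((m - t) + n') = m + n' by omega,
                Gβ (m + n') (by omega) (by omega), Nat.add_sub_cancel_left,
                G1 _ (by omega)]
              have e : α (n' + (m - t)) = α ((m - t) + n') := by
                congr 1
                omega
              omega
          rcases E1 t ht0 with ⟨n, hnk, heqn, hltn⟩ | hpt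
          · by_cases hnm : n < m - t
            · refine ⟨n, fun i hi => ?_, ?_⟩
              · show γ (i + j) = γ i
                rw [hred i, Gα (t + i) (by omega), G1 i (by omega)]
                have h' := heqn i hi
                have e : α (i + t) = α (t + i) := by
                  congr 1
                  omega
                omega
              · show γ (n + j) < γ n
                rw [hred n, Gα (t + n) (by omega), G1 n (by omega)]
                have e : α (n + t) = α (t + n) := by
                  congr 1
                  omega
                omega
            · exact defer fun i hi => heqn i (by omega)
          · exact defer fun i _ => hpt i
      · -- m ≤ t < 2m : strict drop from the word hypothesis
        obtain ⟨n, hn, heqw, hltw⟩ := hword (t - m) (by omega)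
        have hltw' : α 0 - α ((t - m) + n) < α n := hltw
        refine ⟨n, fun i hi => ?_, ?_⟩
        · show γ (i + j) = γ i
          rw [hred i, Gβ (t + i) (by omega) (by omega), G1 i (by omega)]
          have h' : α 0 - α ((t - m) + i) = α i := heqw i hi
          have e : α ((t - m) + i) = α (t + i - m) := by
            congr 1
            omega
          omega
        · show γ (n + j) < γ n
          rw [hred n, Gβ (t + n) (by omega) (by omega), G1 n (by omega)]
          have e : α ((t - m) + n) = α (t + n - m) := by
            congr 1
            omega
          omega
  -- Condition (22): complements of shifted tails are lexicographically smaller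
  have cond2 : ∀ j, 1 ≤ j → LexLT (fun i => γ 0 - γ (i + j)) γ := by
    intro j hj
    have hγ0 : γ 0 = α 0 := G1 0 (by omega)
    by_cases hjL : j < L
    · obtain ⟨n, hnk, heqn, hltn⟩ := E2 j
      refine ⟨n, fun i hi => ?_, ?_⟩
      · show γ 0 - γ (i + j) = γ i
        rw [hγ0, G1 (i + j) (by omega), G1 i (by omega)]
        exact heqn i hi
      · show γ 0 - γ (n + j) < γ n
        rw [hγ0, G1 (n + j) (by omega), G1 n (by omega)]
        exact hltn
    · push_neg at hjL
      obtain ⟨n, heqn, hltn⟩ := cond1 (j + m) (by omega)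
      have hcomp : ∀ i, γ 0 - γ (i + j) = γ (i + (j + m)) := by
        intro i
        rw [hγ0]
        have h' := Gcomp (i + j - L)
        have e1 : L + (i + j - L) = i + j := by omega
        have e2 : L + (i + j - L + m) = i + (j + m) := by omega
        rw [e1, e2] at h'
        exact h'
      refine ⟨n, fun i hi => ?_, ?_⟩
      · show γ 0 - γ (i + j) = γ i
        rw [hcomp i]
        exact heqn i hi
      · show γ 0 - γ (n + j) < γ n
        rw [hcomp n]
        exact hltn
  intro j hj
  exact ⟨cond1 j hj, cond2 j hj⟩
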